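/- Let ℓ≥1, ω∈ℝ^ℓ, let J be a real invertible 2ℓ×2ℓ matrix with Jᵀ=−J, and let H:ℝ^{2ℓ}→ℝ be of class C². Let K:ℝ^ℓ→ℝ^{2ℓ} be C², ℤ^ℓ-periodic, and suppose that for every θ: (i) ∂_ωK(θ) = J⁻¹∇H(K(θ)) (K parametrizes an invariant torus with frequency ω); (ii) DK(θ)ᵀDK(θ) is invertible, with inverse denoted N(θ); (iii) DK(θ)ᵀJDK(θ)=0 (the torus is isotropic). Define A(θ)=J⁻¹∇²H(K(θ)), M(θ)=[DK(θ) | J⁻¹DK(θ)N(θ)] (a 2ℓ×2ℓ matrix), and S(θ)=N(θ)DK(θ)ᵀ[ J⁻¹∂_ω(DK·N)(θ) − A(θ)J⁻¹DK(θ)N(θ) ]. Then for all θ one has the automatic-reducibility identity ∂_ωM(θ) − A(θ)M(θ) = M(θ)·[[0_ℓ, S(θ)],[0_ℓ, 0_ℓ]] (in ℓ×ℓ block form). -/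

import Mathlib

open Matrix Real

noncomputable section

/-- The `2ℓ×ℓ` Jacobian matrix of `K : ℝ^ℓ → ℝ^m` at `θ`. -/
def jacR {ℓ m : ℕ} (K : (Fin ℓ → ℝ) → Fin m → ℝ) (θ : Fin ℓ → ℝ) :
    Matrix (Fin m) (Fin ℓ) ℝ :=
  Matrix.of fun i a => fderiv ℝ K θ (Pi.single a 1) i

/-- The gradient of `H : ℝ^m → ℝ` (w.r.t. the standard inner product). -/
def gradR {m : ℕ} (H : (Fin m → ℝ) → ℝ) (y : Fin m → ℝ) : Fin m → ℝ :=
  fun i => fderiv ℝ H y (Pi.single i 1)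

/-- The Hessian matrix of `H : ℝ^m → ℝ`. -/
def hessR {m : ℕ} (H : (Fin m → ℝ) → ℝ) (y : Fin m → ℝ) : Matrix (Fin m) (Fin m) ℝ :=
  Matrix.of fun i j => fderiv ℝ (fun z => fderiv ℝ H z (Pi.single j 1)) y (Pi.single i 1)

/-- Entrywise directional derivative `∂_ω G` of a matrix-valued function. -/
def matDirDeriv {ℓ : ℕ} {m n : Type*} (ω : Fin ℓ → ℝ)
    (G : (Fin ℓ → ℝ) → Matrix m n ℝ) (θ : Fin ℓ → ℝ) : Matrix m n ℝ :=
  Matrix.of fun i j => fderiv ℝ (fun θ' => G θ' i j) θ ω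

/-- `N(θ) = (DK(θ)ᵀ DK(θ))⁻¹`. -/
def Nmat {ℓ : ℕ} (K : (Fin ℓ → ℝ) → Fin (2 * ℓ) → ℝ) (θ : Fin ℓ → ℝ) :
    Matrix (Fin ℓ) (Fin ℓ) ℝ :=
  ((jacR K θ)ᵀ * jacR K θ)⁻¹

/-- The frame `M(θ) = [DK(θ) | J⁻¹ DK(θ) N(θ)]`. -/
def Mmat {ℓ : ℕ} (J : Matrix (Fin (2 * ℓ)) (Fin (2 * ℓ)) ℝ)
    (K : (Fin ℓ → ℝ) → Fin (2 * ℓ) → ℝ) (θ : Fin ℓ → ℝ) :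
    Matrix (Fin (2 * ℓ)) (Fin ℓ ⊕ Fin ℓ) ℝ :=
  Matrix.fromCols (jacR K θ) (J⁻¹ * jacR K θ * Nmat K θ)

/-- `A(θ) = J⁻¹ ∇²H(K(θ))`. -/
def Amat {ℓ : ℕ} (J : Matrix (Fin (2 * ℓ)) (Fin (2 * ℓ)) ℝ)
    (H : (Fin (2 * ℓ) → ℝ) → ℝ) (K : (Fin ℓ → ℝ) → Fin (2 * ℓ) → ℝ) (θ : Fin ℓ → ℝ) :
    Matrix (Fin (2 * ℓ)) (Fin (2 * ℓ)) ℝ :=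
  J⁻¹ * hessR H (K θ)

/-- The twist matrix
`S(θ) = N DKᵀ [ J⁻¹ ∂_ω(DK·N) − A J⁻¹ DK N ](θ)`. -/
def Smat {ℓ : ℕ} (ω : Fin ℓ → ℝ) (J : Matrix (Fin (2 * ℓ)) (Fin (2 * ℓ)) ℝ)
    (H : (Fin (2 * ℓ) → ℝ) → ℝ) (K : (Fin ℓ → ℝ) → Fin (2 * ℓ) → ℝ) (θ : Fin ℓ → ℝ) :
    Matrix (Fin ℓ) (Fin ℓ) ℝ :=
  Nmat K θ * (jacR K θ)ᵀ *
    (J⁻¹ * matDirDeriv ω (fun θ' => jacR K θ' * Nmat K θ') θ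
      - Amat J H K θ * (J⁻¹ * jacR K θ * Nmat K θ))

section Aux
open Matrix

lemma fderiv_fderiv_apply' {E F : Type*} [NormedAddCommGroup E] [NormedSpace ℝ E]
    [NormedAddCommGroup F] [NormedSpace ℝ F]
    {f : E → F} (hf : Differentiable ℝ (fderiv ℝ f)) (θ v w : E) :
    fderiv ℝ (fun θ' => fderiv ℝ f θ' v) θ w = fderiv ℝ (fderiv ℝ f) θ w v := by
  have h : HasFDerivAt (fun θ' => fderiv ℝ f θ' v)
      ((ContinuousLinearMap.apply ℝ F v).comp (fderiv ℝ (fderiv ℝ f) θ)) θ :=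
    ((ContinuousLinearMap.apply ℝ F v).hasFDerivAt).comp θ (hf θ).hasFDerivAt
  rw [h.fderiv]; rfl

lemma clm_expand' {m : ℕ} {F : Type*} [NormedAddCommGroup F] [NormedSpace ℝ F]
    (L : (Fin m → ℝ) →L[ℝ] F) (u : Fin m → ℝ) :
    L u = ∑ k, u k • L (Pi.single k 1) := by
  have hu : u = ∑ k, u k • (Pi.single k 1 : Fin m → ℝ) := by
    funext j
    simp [Finset.sum_apply, Pi.single_apply]
  conv_lhs => rw [hu]
  rw [map_sum]
  simp

lemma jac_entry_diff {ℓ m : ℕ} {K : (Fin ℓ → ℝ) → Fin m → ℝ} (hK : ContDiff ℝ 2 K)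
    (i : Fin m) (a : Fin ℓ) : Differentiable ℝ (fun θ => jacR K θ i a) := by
  have hd : Differentiable ℝ (fderiv ℝ K) :=
    (hK.fderiv_right (m := 1) (by norm_num)).differentiable (by norm_num)
  exact (((ContinuousLinearMap.proj (R := ℝ) (φ := fun _ : Fin m => ℝ) i).comp
      (ContinuousLinearMap.apply ℝ (Fin m → ℝ) (Pi.single a 1))).differentiable).comp hd

lemma matDirDeriv_const' {ℓ : ℕ} {m n : Type*} (ω : Fin ℓ → ℝ) (C : Matrix m n ℝ)
    (θ : Fin ℓ → ℝ) : matDirDeriv ω (fun _ => C) θ = 0 := by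
  ext i j; simp [matDirDeriv]

lemma matDirDeriv_transpose' {ℓ : ℕ} {m n : Type*} (ω : Fin ℓ → ℝ)
    (X : (Fin ℓ → ℝ) → Matrix m n ℝ) (θ : Fin ℓ → ℝ) :
    matDirDeriv ω (fun θ' => (X θ')ᵀ) θ = (matDirDeriv ω X θ)ᵀ := rfl

lemma matDirDeriv_mul' {ℓ : ℕ} {m n p : Type*} [Fintype n] (ω : Fin ℓ → ℝ)
    (X : (Fin ℓ → ℝ) → Matrix m n ℝ) (Y : (Fin ℓ → ℝ) → Matrix n p ℝ) (θ : Fin ℓ → ℝ)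
    (hX : ∀ i j, DifferentiableAt ℝ (fun θ' => X θ' i j) θ)
    (hY : ∀ i j, DifferentiableAt ℝ (fun θ' => Y θ' i j) θ) :
    matDirDeriv ω (fun θ' => X θ' * Y θ') θ
      = matDirDeriv ω X θ * Y θ + X θ * matDirDeriv ω Y θ := by
  ext i j
  have h : (fun θ' => (X θ' * Y θ') i j) = fun θ' => ∑ k, X θ' i k * Y θ' k j := by
    funext θ'; simp [Matrix.mul_apply]
  simp only [matDirDeriv, Matrix.of_apply, Matrix.add_apply, Matrix.mul_apply, h]
  rw [fderiv_fun_sum (A := fun k θ' => X θ' i k * Y θ' k j) (fun k _ => ((hX i k).mul (hY k j)))]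
  simp only [ContinuousLinearMap.coe_sum', Finset.sum_apply]
  rw [← Finset.sum_add_distrib]
  congr 1; funext k
  rw [fderiv_fun_mul (hX i k) (hY k j)]
  simp [mul_comm]; ring

lemma matDirDeriv_constmul {ℓ : ℕ} {m n p : Type*} [Fintype n] (ω : Fin ℓ → ℝ)
    (C : Matrix m n ℝ) (Y : (Fin ℓ → ℝ) → Matrix n p ℝ) (θ : Fin ℓ → ℝ)
    (hY : ∀ i j, DifferentiableAt ℝ (fun θ' => Y θ' i j) θ) :
    matDirDeriv ω (fun θ' => C * Y θ') θ = C * matDirDeriv ω Y θ := by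
  have := matDirDeriv_mul' ω (fun _ => C) Y θ
    (fun i j => (differentiable_const _ _)) hY
  rw [this, matDirDeriv_const', Matrix.zero_mul, zero_add]

lemma mul_entry_diff {ℓ : ℕ} {m n p : Type*} [Fintype n]
    (X : (Fin ℓ → ℝ) → Matrix m n ℝ) (Y : (Fin ℓ → ℝ) → Matrix n p ℝ)
    (hX : ∀ i j, Differentiable ℝ (fun θ => X θ i j))
    (hY : ∀ i j, Differentiable ℝ (fun θ => Y θ i j)) :
    ∀ i j, Differentiable ℝ (fun θ => (X θ * Y θ) i j) := by
  intro i j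
  have h : (fun θ => (X θ * Y θ) i j) = fun θ => ∑ k, X θ i k * Y θ k j := by
    funext θ; simp [Matrix.mul_apply]
  rw [h]
  exact Differentiable.fun_sum fun k _ => (hX i k).mul (hY k j)

lemma prod_entry_diff {E : Type*} [NormedAddCommGroup E] [NormedSpace ℝ E] {n : Type*}
    (u : Finset n) (f : n → E → ℝ) (hf : ∀ i ∈ u, Differentiable ℝ (f i)) :
    Differentiable ℝ (fun θ => ∏ i ∈ u, f i θ) := by
  classical
  induction u using Finset.induction_on with
  | empty => simp only [Finset.prod_empty]; exact differentiable_const (1 : ℝ)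
  | insert _ _ hnot ih =>
    simp only [Finset.prod_insert hnot]
    exact (hf _ (Finset.mem_insert_self _ _)).mul
      (ih fun i hi => hf i (Finset.mem_insert_of_mem hi))

lemma det_entry_diff {ℓ : ℕ} {n : Type*} [Fintype n] [DecidableEq n]
    (X : (Fin ℓ → ℝ) → Matrix n n ℝ)
    (hX : ∀ i j, Differentiable ℝ (fun θ => X θ i j)) :
    Differentiable ℝ (fun θ => (X θ).det) := by
  have h : (fun θ => (X θ).det)
      = fun θ => ∑ σ : Equiv.Perm n, ((Equiv.Perm.sign σ : ℤ) : ℝ) * ∏ i, X θ (σ i) i := by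
    funext θ; rw [Matrix.det_apply']
  rw [h]
  refine Differentiable.fun_sum fun σ _ => ?_
  have hp : Differentiable ℝ (fun θ => ∏ i, X θ (σ i) i) :=
    prod_entry_diff Finset.univ (fun i θ => X θ (σ i) i) (fun i _ => hX (σ i) i)
  exact hp.const_mul _

lemma adj_entry_diff {ℓ : ℕ} {n : Type*} [Fintype n] [DecidableEq n]
    (X : (Fin ℓ → ℝ) → Matrix n n ℝ)
    (hX : ∀ i j, Differentiable ℝ (fun θ => X θ i j)) :
    ∀ i j, Differentiable ℝ (fun θ => (X θ).adjugate i j) := by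
  intro i j
  have h : (fun θ => (X θ).adjugate i j)
      = fun θ => ((X θ).updateRow j (Pi.single i 1)).det := by
    funext θ; rw [Matrix.adjugate_apply]
  rw [h]
  apply det_entry_diff
  intro k l
  rcases eq_or_ne k j with hkj | hkj
  · subst hkj; simp only [Matrix.updateRow_apply, if_pos rfl]; exact differentiable_const _
  · simp only [Matrix.updateRow_apply, if_neg hkj]; exact hX k l

lemma inv_entry_diff {ℓ : ℕ} {n : Type*} [Fintype n] [DecidableEq n]
    (X : (Fin ℓ → ℝ) → Matrix n n ℝ)
    (hX : ∀ i j, Differentiable ℝ (fun θ => X θ i j))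
    (hdet : ∀ θ, IsUnit (X θ).det) :
    ∀ i j, Differentiable ℝ (fun θ => (X θ)⁻¹ i j) := by
  intro i j
  have h : (fun θ => (X θ)⁻¹ i j) = fun θ => ((X θ).det)⁻¹ * (X θ).adjugate i j := by
    funext θ
    rw [Matrix.inv_def, Ring.inverse_eq_inv]
    simp [Matrix.smul_apply, smul_eq_mul]
  rw [h]
  exact ((det_entry_diff X hX).inv fun θ =>
    (isUnit_iff_ne_zero.mp (hdet θ))).mul (adj_entry_diff X hX i j)

lemma hess_symm {m : ℕ} {H : (Fin m → ℝ) → ℝ} (hH : ContDiff ℝ 2 H) (y : Fin m → ℝ) :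
    ∀ i j, hessR H y i j = hessR H y j i := by
  intro i j
  have hdH : Differentiable ℝ (fderiv ℝ H) :=
    (hH.fderiv_right (m := 1) (by norm_num)).differentiable (by norm_num)
  have hsym := hH.contDiffAt (x := y) |>.isSymmSndFDerivAt (by norm_num)
  simp only [hessR, Matrix.of_apply]
  rw [fderiv_fderiv_apply' hdH, fderiv_fderiv_apply' hdH]
  exact hsym _ _

lemma key1 {ℓ : ℕ} (ω : Fin ℓ → ℝ) (J : Matrix (Fin (2 * ℓ)) (Fin (2 * ℓ)) ℝ)
    (H : (Fin (2 * ℓ) → ℝ) → ℝ) (hH : ContDiff ℝ 2 H)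
    (K : (Fin ℓ → ℝ) → Fin (2 * ℓ) → ℝ) (hK : ContDiff ℝ 2 K)
    (hinv : ∀ θ, fderiv ℝ K θ ω = J⁻¹.mulVec (gradR H (K θ))) (θ : Fin ℓ → ℝ) :
    matDirDeriv ω (jacR K) θ = Amat J H K θ * jacR K θ := by
  have hdK : Differentiable ℝ (fderiv ℝ K) :=
    (hK.fderiv_right (m := 1) (by norm_num)).differentiable (by norm_num)
  have hdH : Differentiable ℝ (fderiv ℝ H) :=
    (hH.fderiv_right (m := 1) (by norm_num)).differentiable (by norm_num)
  have hsymK := hK.contDiffAt (x := θ) |>.isSymmSndFDerivAt (by norm_num)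
  ext i a
  have step1 : ∀ (v w : Fin ℓ → ℝ),
      fderiv ℝ (fun θ' => fderiv ℝ K θ' v i) θ w = fderiv ℝ (fderiv ℝ K) θ w v i := by
    intro v w
    have h : HasFDerivAt (fun θ' => fderiv ℝ K θ' v i)
        (((ContinuousLinearMap.proj (R := ℝ) (φ := fun _ : Fin (2 * ℓ) => ℝ) i).comp
          (ContinuousLinearMap.apply ℝ (Fin (2 * ℓ) → ℝ) v)).comp
            (fderiv ℝ (fderiv ℝ K) θ)) θ :=
      (((ContinuousLinearMap.proj (R := ℝ) (φ := fun _ : Fin (2 * ℓ) => ℝ) i).comp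
          (ContinuousLinearMap.apply ℝ (Fin (2 * ℓ) → ℝ) v)).hasFDerivAt).comp θ
        (hdK θ).hasFDerivAt
    rw [h.fderiv]; rfl
  have lhs1 : matDirDeriv ω (jacR K) θ i a
      = fderiv ℝ (fun θ' => fderiv ℝ K θ' ω i) θ (Pi.single a 1) := by
    simp only [matDirDeriv, jacR, Matrix.of_apply]
    rw [step1 (Pi.single a 1) ω, congrFun (hsymK ω (Pi.single a 1)) i,
      ← step1 ω (Pi.single a 1)]
  rw [lhs1]
  have e2 : (fun θ' => fderiv ℝ K θ' ω i) = fun θ' => fderiv ℝ H (K θ') (J⁻¹ i) := by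
    funext θ'
    rw [hinv θ']
    rw [clm_expand' (fderiv ℝ H (K θ')) (J⁻¹ i)]
    simp [Matrix.mulVec, dotProduct, gradR, smul_eq_mul]
  rw [e2]
  have hKd : Differentiable ℝ K := hK.differentiable (by norm_num)
  have hchain : HasFDerivAt (fun θ' => fderiv ℝ H (K θ') (J⁻¹ i))
      ((ContinuousLinearMap.apply ℝ ℝ (J⁻¹ i)).comp
        ((fderiv ℝ (fderiv ℝ H) (K θ)).comp (fderiv ℝ K θ))) θ :=
    ((ContinuousLinearMap.apply ℝ ℝ (J⁻¹ i)).hasFDerivAt).comp θ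
      (((hdH (K θ)).hasFDerivAt).comp θ (hKd θ).hasFDerivAt)
  rw [hchain.fderiv]
  set B := fderiv ℝ (fderiv ℝ H) (K θ) with hB
  set u := fderiv ℝ K θ (Pi.single a 1) with huu
  have expand : B u (J⁻¹ i)
      = ∑ m, u m * (∑ j, J⁻¹ i j * B (Pi.single m 1) (Pi.single j 1)) := by
    rw [clm_expand' B u]
    simp only [ContinuousLinearMap.coe_sum', Finset.sum_apply,
      ContinuousLinearMap.coe_smul', Pi.smul_apply, smul_eq_mul]
    congr 1; funext m
    rw [clm_expand' (B (Pi.single m 1)) (J⁻¹ i)]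
    simp [smul_eq_mul]
  have happ : ((ContinuousLinearMap.apply ℝ ℝ (J⁻¹ i)).comp
      ((fderiv ℝ (fderiv ℝ H) (K θ)).comp (fderiv ℝ K θ))) (Pi.single a 1)
      = B u (J⁻¹ i) := rfl
  rw [happ, expand]
  have hBh : ∀ m j, B (Pi.single m 1) (Pi.single j 1) = hessR H (K θ) m j := by
    intro m j
    rw [hessR]
    simp only [Matrix.of_apply]
    rw [fderiv_fderiv_apply' hdH]
  simp only [hBh]
  simp only [Amat, Matrix.mul_apply, hessR, jacR, Matrix.of_apply]
  have hsy := hess_symm hH (K θ)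
  simp only [hessR, Matrix.of_apply] at hsy
  refine Finset.sum_congr rfl fun m _ => ?_
  rw [Finset.mul_sum, Finset.sum_mul]
  refine Finset.sum_congr rfl fun j _ => ?_
  rw [hsy m j]
  ring

lemma fromColumns_eq' {m n₁ n₂ : Type*} {A C : Matrix m n₁ ℝ} {B D : Matrix m n₂ ℝ}
    (h1 : A = C) (h2 : B = D) : fromCols A B = fromCols C D := by rw [h1, h2]


lemma endgame {ℓ : ℕ}
    (J : Matrix (Fin (2 * ℓ)) (Fin (2 * ℓ)) ℝ)
    (D : Matrix (Fin (2 * ℓ)) (Fin ℓ) ℝ)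
    (Nm : Matrix (Fin ℓ) (Fin ℓ) ℝ)
    (W : Matrix (Fin (2 * ℓ)) (Fin ℓ) ℝ)
    (hess : Matrix (Fin (2 * ℓ)) (Fin (2 * ℓ)) ℝ)
    (hJJ : J * J⁻¹ = 1)
    (hJinvT : J⁻¹ᵀ = -J⁻¹)
    (hGN : Dᵀ * (D * Nm) = 1)
    (hiso : Dᵀ * (J * D) = 0)
    (hHsT : hessᵀ = hess)
    (hstar : (J⁻¹ * hess * D)ᵀ * (D * Nm) + Dᵀ * W = 0) :
    J⁻¹ * W - J⁻¹ * (hess * (J⁻¹ * (D * Nm)))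
      = D * (Nm * (Dᵀ * (J⁻¹ * W - J⁻¹ * (hess * (J⁻¹ * (D * Nm)))))) := by
  have hJX : ∀ {p : Type} (X : Matrix (Fin (2 * ℓ)) p ℝ), J * (J⁻¹ * X) = X := by
    intro p X; rw [← Matrix.mul_assoc, hJJ, Matrix.one_mul]
  have hGNX : ∀ {p : Type} (X : Matrix (Fin ℓ) p ℝ), Dᵀ * (D * (Nm * X)) = X := by
    intro p X
    have h := congrArg (· * X) hGN
    simpa only [Matrix.mul_assoc, Matrix.one_mul] using h
  have hisoX : ∀ {p : Type} (X : Matrix (Fin ℓ) p ℝ), Dᵀ * (J * (D * X)) = 0 := by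
    intro p X
    have h := congrArg (· * X) hiso
    simpa only [Matrix.mul_assoc, Matrix.zero_mul] using h
  -- transpose identity
  have hT : (J⁻¹ * hess * D)ᵀ = -(Dᵀ * (hess * J⁻¹)) := by
    rw [Matrix.transpose_mul, Matrix.transpose_mul, hHsT, hJinvT, Matrix.mul_neg,
      Matrix.mul_neg]
  -- D^T W identity
  have hDW : Dᵀ * W = Dᵀ * (hess * (J⁻¹ * (D * Nm))) := by
    have h := hstar
    rw [hT, Matrix.neg_mul, neg_add_eq_zero] at h
    simpa only [Matrix.mul_assoc] using h.symm
  set E := J⁻¹ * W - J⁻¹ * (hess * (J⁻¹ * (D * Nm))) with hE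
  have hDJE : Dᵀ * (J * E) = 0 := by
    rw [hE, Matrix.mul_sub, hJX, hJX, Matrix.mul_sub, hDW, sub_self]
  set X := E - D * (Nm * (Dᵀ * E)) with hX
  have hDX : Dᵀ * X = 0 := by
    rw [hX, Matrix.mul_sub, hGNX, sub_self]
  have hDJX : Dᵀ * (J * X) = 0 := by
    rw [hX, Matrix.mul_sub, Matrix.mul_sub, hDJE, hisoX, sub_self]
  -- the frame and its one-sided inverse
  set B := Dᵀ * (J⁻¹ * (D * Nm)) with hB
  set L := fromCols D (J⁻¹ * (D * Nm)) * fromBlocks Nm (-(Nm * B)) (0 : Matrix (Fin ℓ) (Fin ℓ) ℝ) (1 : Matrix (Fin ℓ) (Fin ℓ) ℝ) with hL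
  have hRM : fromRows Dᵀ (Dᵀ * J) * fromCols D (J⁻¹ * (D * Nm))
      = fromBlocks (Dᵀ * D) B (0 : Matrix (Fin ℓ) (Fin ℓ) ℝ) (1 : Matrix (Fin ℓ) (Fin ℓ) ℝ) := by
    rw [Matrix.fromRows_mul_fromCols,
      show Dᵀ * J * D = 0 from by rw [Matrix.mul_assoc]; exact hiso,
      show Dᵀ * J * (J⁻¹ * (D * Nm)) = 1 from by rw [Matrix.mul_assoc, hJX]; exact hGN, hB]
  have hQQ : fromBlocks (Dᵀ * D) B (0 : Matrix (Fin ℓ) (Fin ℓ) ℝ)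
        (1 : Matrix (Fin ℓ) (Fin ℓ) ℝ) * fromBlocks Nm (-(Nm * B)) (0 : Matrix (Fin ℓ) (Fin ℓ) ℝ) (1 : Matrix (Fin ℓ) (Fin ℓ) ℝ) = 1 := by
    rw [Matrix.fromBlocks_multiply]
    simp only [Matrix.mul_zero, Matrix.zero_mul, Matrix.mul_one, Matrix.one_mul,
      add_zero, zero_add, Matrix.mul_neg, neg_zero]
    rw [show Dᵀ * D * Nm = 1 from by rw [Matrix.mul_assoc]; exact hGN,
      show -(Dᵀ * D * (Nm * B)) + B = 0 from by
        rw [Matrix.mul_assoc, hGNX]; exact neg_add_cancel B]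
    exact Matrix.fromBlocks_one
  have hRL : fromRows Dᵀ (Dᵀ * J) * L = 1 := by
    rw [hL, ← Matrix.mul_assoc, hRM, hQQ]
  have e : (Fin ℓ ⊕ Fin ℓ) ≃ Fin (2 * ℓ) :=
    finSumFinEquiv.trans (finCongr (two_mul ℓ).symm)
  have hLR : L * fromRows Dᵀ (Dᵀ * J) = 1 :=
    (Matrix.mul_eq_one_comm_of_equiv e).mp hRL
  have hRX : fromRows Dᵀ (Dᵀ * J) * X = 0 := by
    rw [Matrix.fromRows_mul, hDX,
      show Dᵀ * J * X = 0 from by rw [Matrix.mul_assoc]; exact hDJX]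
    exact Matrix.fromRows_zero
  have hX0 : X = 0 := by
    calc X = (L * fromRows Dᵀ (Dᵀ * J)) * X := by rw [hLR, Matrix.one_mul]
    _ = L * (fromRows Dᵀ (Dᵀ * J) * X) := by rw [Matrix.mul_assoc]
    _ = 0 := by rw [hRX, Matrix.mul_zero]
  have := sub_eq_zero.mp (hX ▸ hX0)
  exact this

end Aux

/-- Automatic reducibility (Lemma `normalization`): along an exactly invariant isotropic
torus `K` with frequency `ω`, the frame `M = [DK, J⁻¹DK N]` reduces the linearized
Hamiltonian vector field to upper triangular block form:
`∂_ω M − A M = M [[0, S],[0, 0]]`. -/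
theorem automatic_reducibility
    (ℓ : ℕ) (hℓ : 1 ≤ ℓ) (ω : Fin ℓ → ℝ)
    (J : Matrix (Fin (2 * ℓ)) (Fin (2 * ℓ)) ℝ)
    (hJdet : IsUnit J.det) (hJanti : Jᵀ = -J)
    (H : (Fin (2 * ℓ) → ℝ) → ℝ) (hH : ContDiff ℝ 2 H)
    (K : (Fin ℓ → ℝ) → Fin (2 * ℓ) → ℝ) (hK : ContDiff ℝ 2 K)
    (hKper : ∀ (θ : Fin ℓ → ℝ) (k : Fin ℓ → ℤ), K (θ + fun i => (k i : ℝ)) = K θ)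
    (hinv : ∀ θ, fderiv ℝ K θ ω = J⁻¹.mulVec (gradR H (K θ)))
    (hGram : ∀ θ, IsUnit ((jacR K θ)ᵀ * jacR K θ).det)
    (hiso : ∀ θ, (jacR K θ)ᵀ * J * jacR K θ = 0) :
    ∀ θ : Fin ℓ → ℝ,
      matDirDeriv ω (Mmat J K) θ - Amat J H K θ * Mmat J K θ
        = Mmat J K θ * Matrix.fromBlocks 0 (Smat ω J H K θ) 0 0 := by
  intro θ
  classical
  have hDd : ∀ (i : Fin (2 * ℓ)) (a : Fin ℓ), Differentiable ℝ (fun θ' => jacR K θ' i a) :=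
    fun i a => jac_entry_diff hK i a
  have hDTd : ∀ (a : Fin ℓ) (i : Fin (2 * ℓ)),
      Differentiable ℝ (fun θ' => (jacR K θ')ᵀ a i) := fun a i => hDd i a
  have hGd : ∀ a b, Differentiable ℝ (fun θ' => ((jacR K θ')ᵀ * jacR K θ') a b) :=
    mul_entry_diff _ _ hDTd hDd
  have hNd : ∀ a b, Differentiable ℝ (fun θ' => Nmat K θ' a b) :=
    inv_entry_diff (fun θ' => (jacR K θ')ᵀ * jacR K θ') hGd hGram
  have hDNd : ∀ i b, Differentiable ℝ (fun θ' => (jacR K θ' * Nmat K θ') i b) :=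
    mul_entry_diff _ _ hDd hNd
  have hDo : matDirDeriv ω (jacR K) θ = Amat J H K θ * jacR K θ := key1 ω J H hH K hK hinv θ
  -- split the directional derivative of the frame into columns
  have hMsplit : matDirDeriv ω (Mmat J K) θ
      = fromCols (matDirDeriv ω (jacR K) θ)
          (J⁻¹ * matDirDeriv ω (fun θ' => jacR K θ' * Nmat K θ') θ) := by
    have h1 : Mmat J K
        = fun θ' => fromCols (jacR K θ') (J⁻¹ * (jacR K θ' * Nmat K θ')) := by
      funext θ'; rw [Mmat, Matrix.mul_assoc]
    rw [h1]
    have hsplit : matDirDeriv ω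
        (fun θ' => fromCols (jacR K θ') (J⁻¹ * (jacR K θ' * Nmat K θ'))) θ
        = fromCols (matDirDeriv ω (jacR K) θ)
            (matDirDeriv ω (fun θ' => J⁻¹ * (jacR K θ' * Nmat K θ')) θ) := by
      ext i j
      cases j <;> rfl
    rw [hsplit, matDirDeriv_constmul ω J⁻¹ _ θ (fun i b => (hDNd i b) θ)]
  -- inputs for the algebraic endgame
  have hJJ : J * J⁻¹ = 1 := Matrix.mul_nonsing_inv J hJdet
  have hJinvT : J⁻¹ᵀ = -J⁻¹ := by
    rw [Matrix.transpose_nonsing_inv, hJanti]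
    refine Matrix.inv_eq_right_inv ?_
    rw [Matrix.neg_mul, Matrix.mul_neg, neg_neg, hJJ]
  have hGN : (jacR K θ)ᵀ * (jacR K θ * Nmat K θ) = 1 := by
    rw [← Matrix.mul_assoc]; exact Matrix.mul_nonsing_inv _ (hGram θ)
  have hiso' : (jacR K θ)ᵀ * (J * jacR K θ) = 0 := by
    rw [← Matrix.mul_assoc]; exact hiso θ
  have hHsT : (hessR H (K θ))ᵀ = hessR H (K θ) := by
    ext i j
    simp only [Matrix.transpose_apply]
    exact hess_symm hH (K θ) j i
  have hstar : (J⁻¹ * hessR H (K θ) * jacR K θ)ᵀ * (jacR K θ * Nmat K θ)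
      + (jacR K θ)ᵀ * matDirDeriv ω (fun θ' => jacR K θ' * Nmat K θ') θ = 0 := by
    have hconst : (fun θ' => (jacR K θ')ᵀ * (jacR K θ' * Nmat K θ'))
        = fun _ => (1 : Matrix (Fin ℓ) (Fin ℓ) ℝ) := by
      funext θ'
      rw [← Matrix.mul_assoc]
      exact Matrix.mul_nonsing_inv _ (hGram θ')
    have h1 := matDirDeriv_mul' ω (fun θ' => (jacR K θ')ᵀ)
      (fun θ' => jacR K θ' * Nmat K θ') θ (fun a i => (hDTd a i) θ)
      (fun i b => (hDNd i b) θ)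
    rw [hconst, matDirDeriv_const', matDirDeriv_transpose', hDo] at h1
    exact h1.symm
  have hfinal := endgame J (jacR K θ) (Nmat K θ)
    (matDirDeriv ω (fun θ' => jacR K θ' * Nmat K θ') θ) (hessR H (K θ))
    hJJ hJinvT hGN hiso' hHsT hstar
  -- assemble
  rw [hMsplit,
    show Mmat J K θ = fromCols (jacR K θ) (J⁻¹ * jacR K θ * Nmat K θ) from rfl,
    Matrix.mul_fromCols]
  erw [Matrix.fromCols_mul_fromBlocks]
  simp only [Matrix.mul_zero, add_zero, zero_add]
  rw [show fromCols (matDirDeriv ω (jacR K) θ)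
        (J⁻¹ * matDirDeriv ω (fun θ' => jacR K θ' * Nmat K θ') θ)
      - fromCols (Amat J H K θ * jacR K θ)
        (Amat J H K θ * (J⁻¹ * jacR K θ * Nmat K θ))
      = fromCols (matDirDeriv ω (jacR K) θ - Amat J H K θ * jacR K θ)
          (J⁻¹ * matDirDeriv ω (fun θ' => jacR K θ' * Nmat K θ') θ
            - Amat J H K θ * (J⁻¹ * jacR K θ * Nmat K θ)) from by
    ext i j; cases j <;> simp [Matrix.fromCols, Matrix.sub_apply]]
  refine fromColumns_eq' ?_ ?_
  · rw [hDo, sub_self]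
  · simp only [Smat, Amat, Matrix.mul_assoc]
    exact hfinal
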